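/- For every φ ∈ (0, π) and every pair (i, j) of distinct qubits among N qubits, the product states |0⟩^{⊗N} and |φ⁺⟩^{⊗N} with |φ⁺⟩ = cos(φ/2)|0⟩ + sin(φ/2)|1⟩ are fixed by the two-qubit controlled unitary U_{ij}^{(φ)} = |0⟩⟨0|ᵢ ⊗ Iⱼ + |1⟩⟨1|ᵢ ⊗ (cos φ Zⱼ + sin φ Xⱼ) (acting as identity on the other N−2 qubits): U_{ij}^{(φ)}|0⟩^{⊗N} = |0⟩^{⊗N} and U_{ij}^{(φ)}|φ⁺⟩^{⊗N} = |φ⁺⟩^{⊗N}. -/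

import Mathlib

open Matrix

/-- The single-qubit interaction `U^(φ) = cos φ · Z + sin φ · X`. -/
noncomputable def Uphi (φ : ℝ) : Matrix (Fin 2) (Fin 2) ℂ :=
  !![(Real.cos φ : ℂ), (Real.sin φ : ℂ); (Real.sin φ : ℂ), (-Real.cos φ : ℂ)]

/-- The product state `|v⟩^{⊗N}` of `N` qubits, in the computational basis
representation of `(ℂ²)^{⊗N}` as functions `(Fin N → Fin 2) → ℂ`. -/
noncomputable def prodState (N : ℕ) (v : Fin 2 → ℂ) : (Fin N → Fin 2) → ℂ :=
  fun z => ∏ m, v (z m)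

/-- `|φ⁺⟩ = cos(φ/2)|0⟩ + sin(φ/2)|1⟩`. -/
noncomputable def phiPlus (φ : ℝ) : Fin 2 → ℂ :=
  ![(Real.cos (φ / 2) : ℂ), (Real.sin (φ / 2) : ℂ)]

/-- `|φ⁻⟩ = sin(φ/2)|0⟩ − cos(φ/2)|1⟩`. -/
noncomputable def phiMinus (φ : ℝ) : Fin 2 → ℂ :=
  ![(Real.sin (φ / 2) : ℂ), (-Real.cos (φ / 2) : ℂ)]

/-- The single-qubit state `|0⟩`. -/
noncomputable def qzero : Fin 2 → ℂ := ![1, 0]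

/-- The two-qubit controlled unitary `U_{ij}^{(φ)}` acting on `N` qubits, with control
qubit `i` and target qubit `j`, acting as identity on all other qubits. -/
noncomputable def cu2 (N : ℕ) (φ : ℝ) (i j : Fin N) :
    Matrix (Fin N → Fin 2) (Fin N → Fin 2) ℂ :=
  fun z w =>
    if w i = 0 then (if z = w then 1 else 0)
    else if ∀ m, m ≠ j → z m = w m then Uphi φ (z j) (w j) else 0

lemma uphi_eigen (φ : ℝ) (a : Fin 2) :
    Uphi φ a 0 * phiPlus φ 0 + Uphi φ a 1 * phiPlus φ 1 = phiPlus φ a := by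
  have h1 : Real.cos φ * Real.cos (φ/2) + Real.sin φ * Real.sin (φ/2) = Real.cos (φ/2) := by
    have := Real.cos_sub φ (φ/2)
    rw [show φ - φ/2 = φ/2 by ring] at this
    linarith
  have h2 : Real.sin φ * Real.cos (φ/2) - Real.cos φ * Real.sin (φ/2) = Real.sin (φ/2) := by
    have := Real.sin_sub φ (φ/2)
    rw [show φ - φ/2 = φ/2 by ring] at this
    linarith
  fin_cases a
  · simp [Uphi, phiPlus]
    have := congrArg Complex.ofReal h1
    push_cast at this ⊢
    linear_combination this
  · simp [Uphi, phiPlus]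
    have := congrArg Complex.ofReal h2
    push_cast at this ⊢
    linear_combination this

/-- The product states `|0⟩^{⊗N}` and `|φ⁺⟩^{⊗N}` are fixed by every two-qubit
cu-interaction `U_{ij}^{(φ)}`. -/
theorem cu2_fixes_zero_and_plus (N : ℕ) (φ : ℝ) (hφ : φ ∈ Set.Ioo 0 Real.pi)
    (i j : Fin N) (hij : i ≠ j) :
    cu2 N φ i j *ᵥ prodState N qzero = prodState N qzero ∧
    cu2 N φ i j *ᵥ prodState N (phiPlus φ) = prodState N (phiPlus φ) := by
  constructor
  · -- |0...0⟩ case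
    have hz : ∀ w : Fin N → Fin 2, prodState N qzero w
        = if w = (fun _ => 0) then 1 else 0 := by
      intro w
      by_cases h : w = fun _ => 0
      · subst h; simp [prodState, qzero]
      · rw [if_neg h]
        obtain ⟨m, hm⟩ : ∃ m, w m ≠ 0 := by
          by_contra hc; push_neg at hc; exact h (funext fun m => hc m)
        refine Finset.prod_eq_zero (Finset.mem_univ m) ?_
        have : w m = 1 := by
          rcases Fin.exists_fin_two.mp ⟨w m, rfl⟩ with h' | h' <;> simp_all
        rw [this]; simp [qzero]
    funext z
    simp only [mulVec, dotProduct]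
    rw [Finset.sum_congr rfl (fun w _ => by rw [hz w])]
    rw [Finset.sum_eq_single (fun _ => (0 : Fin 2))]
    · simp [cu2, hz]
    · intro w _ hw; simp [hw]
    · intro h; exact absurd (Finset.mem_univ _) h
  · funext z
    simp only [mulVec, dotProduct]
    by_cases hzi : z i = 0
    · rw [Finset.sum_eq_single z]
      · have : cu2 N φ i j z z = 1 := by simp [cu2, hzi]
        rw [this, one_mul]
      · intro w _ hw
        unfold cu2
        by_cases hwi : w i = 0
        · rw [if_pos hwi, if_neg (fun h => hw h.symm), zero_mul]
        · rw [if_neg hwi]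
          have : ¬ ∀ m, m ≠ j → z m = w m := by
            intro h
            exact hwi (h i hij ▸ hzi)
          rw [if_neg this, zero_mul]
      · intro h; exact absurd (Finset.mem_univ _) h
    · -- z i = 1
      have hz1 : z i = 1 := by
        rcases Fin.exists_fin_two.mp ⟨z i, rfl⟩ with h' | h' <;> simp_all
      set u : Fin 2 → (Fin N → Fin 2) := fun b => Function.update z j b with hu
      have hune : u 0 ≠ u 1 := by
        intro h
        have := congrFun h j
        simp [hu, Function.update_self] at this
      have hvanish : ∀ w : Fin N → Fin 2, w ∉ ({u 0, u 1} : Finset (Fin N → Fin 2)) →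
          cu2 N φ i j z w * prodState N (phiPlus φ) w = 0 := by
        intro w hw
        simp only [Finset.mem_insert, Finset.mem_singleton] at hw
        push_neg at hw
        unfold cu2
        by_cases hwi : w i = 0
        · rw [if_pos hwi, if_neg, zero_mul]
          intro h; rw [← h] at hwi; exact hzi hwi
        · rw [if_neg hwi]
          have : ¬ ∀ m, m ≠ j → z m = w m := by
            intro h
            have : w = u (w j) := by
              funext m
              by_cases hm : m = j
              · subst hm; simp [hu, Function.update_self]
              · simp [hu, Function.update_of_ne hm, (h m hm).symm]
            rcases Fin.exists_fin_two.mp ⟨w j, rfl⟩ with h' | h' <;>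
              rw [h'] at this <;> [exact hw.1 this; exact hw.2 this]
          rw [if_neg this, zero_mul]
      rw [← Finset.sum_subset (Finset.subset_univ {u 0, u 1})
        (fun w _ hw => hvanish w hw)]
      rw [Finset.sum_pair hune]
      have hcu : ∀ b : Fin 2, cu2 N φ i j z (u b) = Uphi φ (z j) b := by
        intro b
        unfold cu2
        have hui : u b i = z i := Function.update_of_ne hij b z
        rw [if_neg (by rw [hui, hz1]; exact one_ne_zero)]
        rw [if_pos (fun m hm => (Function.update_of_ne hm _ _).symm)]
        simp [hu, Function.update_self]
      have hps : ∀ b : Fin 2, prodState N (phiPlus φ) (u b)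
          = phiPlus φ b * ∏ m ∈ Finset.univ.erase j, phiPlus φ (z m) := by
        intro b
        unfold prodState
        rw [← Finset.mul_prod_erase Finset.univ _ (Finset.mem_univ j)]
        congr 1
        · simp [hu, Function.update_self]
        · exact Finset.prod_congr rfl fun m hm => by
            simp [hu, Function.update_of_ne (Finset.ne_of_mem_erase hm)]
      have htgt : prodState N (phiPlus φ) z
          = phiPlus φ (z j) * ∏ m ∈ Finset.univ.erase j, phiPlus φ (z m) := by
        unfold prodState
        rw [← Finset.mul_prod_erase Finset.univ _ (Finset.mem_univ j)]
      rw [hcu 0, hcu 1, hps 0, hps 1, htgt, ← uphi_eigen φ (z j)]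
      ring
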